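/- arXiv:1307.4933 — 2 statements merged into one kernel-verified Lean document; each statement's English description precedes it below -/
import Mathlib

section
/- Let k ≥ 2 and let d be a chord diagram with exactly 2k chords containing a leaf, i.e., a chord that intersects exactly one other chord of d. Then R_k(d) = 0. -/
open Finset
open scoped Classical

/-- The cyclic successor of an element of `Fin m`. -/
def cyclicSucc {m : ℕ} (a : Fin m) : Fin m :=
  ⟨((a : ℕ) + 1) % m, Nat.mod_lt _ a.pos⟩

/-- The cyclic predecessor of an element of `Fin m`. -/
def cyclicPred {m : ℕ} (a : Fin m) : Fin m :=
  ⟨((a : ℕ) + (m - 1)) % m, Nat.mod_lt _ a.pos⟩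

/-- `f : Fin l → V` traces an `l`-cycle of `G`: it is injective and cyclically
consecutive vertices are adjacent. -/
def IsCycleMap {V : Type} (G : SimpleGraph V) (l : ℕ) (f : Fin l → V) : Prop :=
  Function.Injective f ∧ ∀ i : Fin l, G.Adj (f i) (f (cyclicSucc i))

/-- The number `E_l(G)` of `l`-cycles of `G`, counted up to rotation and reflection
(each such cycle is traced by exactly `2 * l` maps `Fin l → V`). -/
noncomputable def cycleCount {V : Type} [Fintype V] (G : SimpleGraph V) (l : ℕ) : ℕ :=
  (Finset.univ.filter (fun f : Fin l → V => IsCycleMap G l f)).card / (2 * l)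

/-- `o` is an orientation of `G`: every edge gets exactly one direction. -/
def IsOrientation {V : Type} (G : SimpleGraph V) (o : V → V → Prop) : Prop :=
  ∀ ⦃x y : V⦄, G.Adj x y → (o x y ↔ ¬ o y x)

/-- The sign of a cycle map with respect to a direction relation `o`:
`+1` iff the number of edges agreeing with the traversal is even. -/
noncomputable def cycleSign {V : Type} {l : ℕ} (o : V → V → Prop) (f : Fin l → V) : ℤ :=
  (-1) ^ (Finset.univ.filter (fun i : Fin l => o (f i) (f (cyclicSucc i)))).card

/-- The sum of signs of all `l`-cycles of `G` (counted up to rotation and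
reflection) with respect to the direction relation `o`. -/
noncomputable def signedCycleSum {V : Type} [Fintype V] (G : SimpleGraph V)
    (o : V → V → Prop) (l : ℕ) : ℤ :=
  (∑ f ∈ Finset.univ.filter (fun f : Fin l → V => IsCycleMap G l f),
    cycleSign o f) / (2 * (l : ℤ))

/-- The graph `Γ'_AB`: toggle the adjacency between the vertices `A` and `B`. -/
def toggleEdge {V : Type} (G : SimpleGraph V) (A B : V) : SimpleGraph V where
  Adj x y := x ≠ y ∧ (G.Adj x y ↔ ¬((x = A ∧ y = B) ∨ (x = B ∧ y = A)))
  symm := by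
    refine ⟨?_⟩
    intro x y h
    obtain ⟨h1, h2⟩ := h
    refine ⟨h1.symm, ?_⟩
    rw [G.adj_comm]
    tauto
  loopless := ⟨fun x h => h.1 rfl⟩

/-- The graph `Γ̃_AB`: toggle the adjacency between `A` and every vertex
`C ∉ {A, B}` adjacent to `B` in `Γ`. -/
def tildeGraph {V : Type} (G : SimpleGraph V) (A B : V) : SimpleGraph V where
  Adj x y := x ≠ y ∧
    (G.Adj x y ↔ ¬((x = A ∧ y ≠ B ∧ G.Adj y B) ∨ (y = A ∧ x ≠ B ∧ G.Adj x B)))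
  symm := by
    refine ⟨?_⟩
    intro x y h
    obtain ⟨h1, h2⟩ := h
    refine ⟨h1.symm, ?_⟩
    rw [G.adj_comm]
    tauto
  loopless := ⟨fun x h => h.1 rfl⟩

/-- A chord diagram of order `n`: a partition of the `2 * n` cyclically ordered
points `0, 1, …, 2n - 1` into `n` two-element blocks (chords), here recorded by
the function assigning to each point its chord. -/
structure ChordDiagram (n : ℕ) where
  chord : Fin (2 * n) → Fin n
  fiber_two : ∀ i : Fin n, (Finset.univ.filter (fun x => chord x = i)).card = 2

namespace ChordDiagram

variable {n : ℕ}

/-- The pair of endpoints of the chord `i`. -/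
def endpoints (d : ChordDiagram n) (i : Fin n) : Finset (Fin (2 * n)) :=
  Finset.univ.filter (fun x => d.chord x = i)

lemma endpoints_nonempty (d : ChordDiagram n) (i : Fin n) : (d.endpoints i).Nonempty := by
  rw [← Finset.card_pos, endpoints, d.fiber_two]
  norm_num

/-- The smaller endpoint of the chord `i`. -/
def lo (d : ChordDiagram n) (i : Fin n) : Fin (2 * n) :=
  (d.endpoints i).min' (d.endpoints_nonempty i)

/-- The larger endpoint of the chord `i`. -/
def hi (d : ChordDiagram n) (i : Fin n) : Fin (2 * n) :=
  (d.endpoints i).max' (d.endpoints_nonempty i)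

/-- Chords `i` and `j` cross: exactly one endpoint of `j` lies strictly between
the two endpoints of `i`. -/
def Crosses (d : ChordDiagram n) (i j : Fin n) : Prop :=
  Xor' (d.lo i < d.lo j ∧ d.lo j < d.hi i) (d.lo i < d.hi j ∧ d.hi j < d.hi i)

/-- The intersection graph `γ(d)` of the chord diagram `d`. -/
def interGraph (d : ChordDiagram n) : SimpleGraph (Fin n) where
  Adj i j := i ≠ j ∧ (d.Crosses i j ∨ d.Crosses j i)
  symm := ⟨fun i j h => ⟨h.1.symm, h.2.symm⟩⟩
  loopless := ⟨fun i h => h.1 rfl⟩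

lemma chord_lo (d : ChordDiagram n) (i : Fin n) : d.chord (d.lo i) = i := by
  have h := (d.endpoints i).min'_mem (d.endpoints_nonempty i)
  exact (Finset.mem_filter.mp h).2

/-- An orientation of a chord diagram: a choice of a beginning point for each
chord (the other endpoint being its end). -/
def Orientation (d : ChordDiagram n) : Type :=
  { b : Fin n → Fin (2 * n) // ∀ i, d.chord (b i) = i }

/-- The end of the chord `i`, i.e. its endpoint other than the beginning. -/
def endOf (d : ChordDiagram n) (o : d.Orientation) (i : Fin n) : Fin (2 * n) :=
  if o.1 i = d.lo i then d.hi i else d.lo i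

/-- The point `z` lies on the arc going in the positive direction from `a` to `b`. -/
def InArc {m : ℕ} (a b z : Fin m) : Prop :=
  if a < b then a < z ∧ z < b else a < z ∨ z < b

/-- The direction induced by an orientation of the chords on the edges of the
intersection graph: the edge between `i` and `j` is directed from `i` to `j`
iff the beginning of `j` lies on the arc going in the positive direction from
the beginning of `i` to the end of `i`. -/
def dir (d : ChordDiagram n) (o : d.Orientation) (i j : Fin n) : Prop :=
  InArc (o.1 i) (d.endOf o i) (o.1 j)

/-- The canonical orientation: every chord begins at its smaller endpoint. -/
def canonical (d : ChordDiagram n) : d.Orientation :=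
  ⟨d.lo, d.chord_lo⟩

end ChordDiagram

/-- The weight system `R_k`: the sum of the signs of the `2k`-cycles of the
directed intersection graph (for the canonical orientation of the chords). -/
noncomputable def Rk (k : ℕ) {n : ℕ} (d : ChordDiagram n) : ℤ :=
  signedCycleSum d.interGraph (d.dir d.canonical) (2 * k)

/-- When the point at position `p` is moved to position `q` (keeping the relative
order of all the other points), `moveFun p q r` is the old position of the point
occupying the position `r` after the move. -/
def moveFun {m : ℕ} (p q : Fin m) (r : Fin m) : Fin m :=
  if r = q then p
  else if h : (p : ℕ) ≤ (r : ℕ) ∧ (r : ℕ) < (q : ℕ) then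
    ⟨(r : ℕ) + 1, by have := q.isLt; omega⟩
  else if h' : (q : ℕ) < (r : ℕ) ∧ (r : ℕ) ≤ (p : ℕ) then
    ⟨(r : ℕ) - 1, by have := r.isLt; omega⟩
  else r

/-- The invariant `w_C`: `1` if the adjacency matrix of the graph over `ZMod 2`
is nondegenerate, `0` otherwise. -/
noncomputable def wC {V : Type} [Fintype V] (G : SimpleGraph V) : ℤ :=
  if (G.adjMatrix (ZMod 2)).det ≠ 0 then 1 else 0

/-- All set partitions of `Fin n` into nonempty blocks. -/
noncomputable def finPartitions (n : ℕ) : Finset (Finset (Finset (Fin n))) :=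
  Finset.univ.filter (fun P =>
    (∀ s ∈ P, s.Nonempty) ∧ ∀ x : Fin n, ∃! s, s ∈ P ∧ x ∈ s)

/-- A `4`-invariant of finite simple graphs: an integer-valued, isomorphism
invariant function satisfying the `4`-term relation for graphs. -/
structure FourInvariant where
  val : ∀ n : ℕ, SimpleGraph (Fin n) → ℤ
  iso_invariant : ∀ {n m : ℕ} (G : SimpleGraph (Fin n)) (H : SimpleGraph (Fin m)),
    Nonempty (G ≃g H) → val n G = val m H
  four_term : ∀ (n : ℕ) (G : SimpleGraph (Fin n)) (A B : Fin n), A ≠ B →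
    val n G - val n (toggleEdge G A B) =
      val n (tildeGraph G A B) - val n (toggleEdge (tildeGraph G A B) A B)

/-- The `5`-wheel: a `5`-cycle on the vertices `0, …, 4` together with the hub `5`
adjacent to all five cycle vertices. -/
def wheel5 : SimpleGraph (Fin 6) :=
  SimpleGraph.fromRel (fun x y =>
    ((x : ℕ) = 5 ∧ (y : ℕ) < 5) ∨
    ((x : ℕ) < 5 ∧ (y : ℕ) < 5 ∧ (y : ℕ) = ((x : ℕ) + 1) % 5))

/-- The triangular prism: two triangles `{0, 1, 2}` and `{3, 4, 5}` joined by the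
perfect matching `i — i + 3`. -/
def prism : SimpleGraph (Fin 6) :=
  SimpleGraph.fromRel (fun x y =>
    ((x : ℕ) < 3 ∧ (y : ℕ) < 3 ∧ x ≠ y) ∨
    (3 ≤ (x : ℕ) ∧ 3 ≤ (y : ℕ) ∧ x ≠ y) ∨
    ((y : ℕ) = (x : ℕ) + 3))

lemma cyclicSucc_ne_cyclicPred {m : ℕ} (hm : 3 ≤ m) (a : Fin m) :
    cyclicSucc a ≠ cyclicPred a := by
  intro h
  have ha := a.isLt
  simp only [cyclicSucc, cyclicPred, Fin.ext_iff] at h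
  rcases Nat.lt_or_ge ((a : ℕ) + 1) m with h1 | h1
  · rw [Nat.mod_eq_of_lt h1] at h
    rcases Nat.eq_zero_or_pos (a : ℕ) with h0 | h0
    · rw [h0] at h
      rw [Nat.mod_eq_of_lt (by omega)] at h
      omega
    · have : (a : ℕ) + (m - 1) = ((a : ℕ) - 1) + m := by omega
      rw [this, Nat.add_mod_right, Nat.mod_eq_of_lt (by omega)] at h
      omega
  · have hae : (a : ℕ) = m - 1 := by omega
    have : (a : ℕ) + 1 = m := by omega
    rw [this, Nat.mod_self] at h
    have : (a : ℕ) + (m - 1) = (m - 2) + m := by omega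
    rw [this, Nat.add_mod_right, Nat.mod_eq_of_lt (by omega)] at h
    omega

theorem Rk_eq_zero_of_leaf (k : ℕ) (hk : 2 ≤ k) (d : ChordDiagram (2 * k))
    (i : Fin (2 * k)) (hleaf : ∃! j : Fin (2 * k), d.interGraph.Adj i j) :
    Rk k d = 0 := by
  obtain ⟨j0, hj0, huniq⟩ := hleaf
  have hempty : (Finset.univ.filter
      (fun f : Fin (2 * k) → Fin (2 * k) => IsCycleMap d.interGraph (2 * k) f)) = ∅ := by
    rw [Finset.filter_eq_empty_iff]
    intro f _
    rintro ⟨hinj, hadj⟩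
    have hsurj : Function.Surjective f := Finite.surjective_of_injective hinj
    obtain ⟨p, hp⟩ := hsurj i
    set q := cyclicPred p with hq
    have hqs : cyclicSucc q = p := by
      have hpl := p.isLt
      have hv : (q : ℕ) = ((p : ℕ) + (2 * k - 1)) % (2 * k) := rfl
      simp only [cyclicSucc, Fin.ext_iff, hv]
      rcases Nat.eq_zero_or_pos (p : ℕ) with h0 | h0
      · rw [h0, Nat.zero_add,
          Nat.mod_eq_of_lt (show 2 * k - 1 < 2 * k by omega),
          show 2 * k - 1 + 1 = 2 * k by omega, Nat.mod_self]
      · have h1 : (p : ℕ) + (2 * k - 1) = ((p : ℕ) - 1) + 2 * k := by omega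
        rw [h1, Nat.add_mod_right,
          Nat.mod_eq_of_lt (show (p : ℕ) - 1 < 2 * k by omega),
          show (p : ℕ) - 1 + 1 = (p : ℕ) by omega,
          Nat.mod_eq_of_lt (by omega)]
    have h1 : d.interGraph.Adj i (f (cyclicSucc p)) := hp ▸ hadj p
    have h2 : d.interGraph.Adj i (f q) := by
      have h := hadj q
      rw [hqs, hp] at h
      exact h.symm
    have heq : f (cyclicSucc p) = f q := by
      rw [huniq _ h1, huniq _ h2]
    have : cyclicSucc p = cyclicPred p := hinj heq
    exact cyclicSucc_ne_cyclicPred (by omega) p this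
  unfold Rk signedCycleSum
  rw [hempty]
  simp
end

section
/- Let f be an integer-valued function on simple graphs with exactly 6 vertices, invariant under graph isomorphism, satisfying the 4-term relation f(Γ) − f(Γ′_AB) = f(Γ̃_AB) − f(Γ̃′_AB) for every 6-vertex simple graph Γ and all distinct vertices A, B, and such that f(γ(d)) = R_3(d) for every chord diagram d of order 6. Then f(W_5) = −3, where W_5 is the 5-wheel (a 5-cycle together with one additional vertex adjacent to all five cycle vertices), and f(P) = −1, where P is the triangular prism (two disjoint triangles joined by a perfect matching, i.e., the Cartesian product of K_3 and K_2). -/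
open Finset
open scoped Classical

section Decid

instance instDecInArc {m : ℕ} (a b z : Fin m) : Decidable (ChordDiagram.InArc a b z) :=
  decidable_of_iff (if a < b then a < z ∧ z < b else a < z ∨ z < b)
    (by rw [ChordDiagram.InArc])

instance instDecCrosses {n : ℕ} (d : ChordDiagram n) : DecidableRel d.Crosses := fun i j =>
  decidable_of_iff (((d.lo i < d.lo j ∧ d.lo j < d.hi i) ∧ ¬(d.lo i < d.hi j ∧ d.hi j < d.hi i)) ∨
      ((d.lo i < d.hi j ∧ d.hi j < d.hi i) ∧ ¬(d.lo i < d.lo j ∧ d.lo j < d.hi i)))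
    (by rw [ChordDiagram.Crosses]; exact Iff.rfl)

instance instDecInter {n : ℕ} (d : ChordDiagram n) : DecidableRel d.interGraph.Adj := fun i j =>
  decidable_of_iff (i ≠ j ∧ (d.Crosses i j ∨ d.Crosses j i)) Iff.rfl

instance instDecDir {n : ℕ} (d : ChordDiagram n) (o : d.Orientation) :
    DecidableRel (d.dir o) := fun i j =>
  decidable_of_iff (ChordDiagram.InArc (o.1 i) (d.endOf o i) (o.1 j))
    (by rw [ChordDiagram.dir])

instance instDecCycleMap {V : Type} [DecidableEq V] [Fintype V] (G : SimpleGraph V)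
    [DecidableRel G.Adj] (l : ℕ) : DecidablePred (IsCycleMap G l) := fun f =>
  decidable_of_iff (Function.Injective f ∧ ∀ i : Fin l, G.Adj (f i) (f (cyclicSucc i)))
    (by rw [IsCycleMap])

instance instDecToggle {V : Type} [DecidableEq V] (G : SimpleGraph V) [DecidableRel G.Adj]
    (A B : V) : DecidableRel (toggleEdge G A B).Adj := fun x y =>
  decidable_of_iff (x ≠ y ∧ (G.Adj x y ↔ ¬((x = A ∧ y = B) ∨ (x = B ∧ y = A)))) Iff.rfl

instance instDecTilde {V : Type} [DecidableEq V] (G : SimpleGraph V) [DecidableRel G.Adj]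
    (A B : V) : DecidableRel (tildeGraph G A B).Adj := fun x y =>
  decidable_of_iff (x ≠ y ∧
    (G.Adj x y ↔ ¬((x = A ∧ y ≠ B ∧ G.Adj y B) ∨ (y = A ∧ x ≠ B ∧ G.Adj x B)))) Iff.rfl

instance instDecWheel : DecidableRel wheel5.Adj := fun x y =>
  decidable_of_iff (x ≠ y ∧
    ((((x : ℕ) = 5 ∧ (y : ℕ) < 5) ∨ ((x : ℕ) < 5 ∧ (y : ℕ) < 5 ∧ (y : ℕ) = ((x : ℕ) + 1) % 5)) ∨
     (((y : ℕ) = 5 ∧ (x : ℕ) < 5) ∨ ((y : ℕ) < 5 ∧ (x : ℕ) < 5 ∧ (x : ℕ) = ((y : ℕ) + 1) % 5))))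
    Iff.rfl

instance instDecPrism : DecidableRel prism.Adj := fun x y =>
  decidable_of_iff (x ≠ y ∧
    ((((x : ℕ) < 3 ∧ (y : ℕ) < 3 ∧ x ≠ y) ∨ (3 ≤ (x : ℕ) ∧ 3 ≤ (y : ℕ) ∧ x ≠ y) ∨
       ((y : ℕ) = (x : ℕ) + 3)) ∨
     (((y : ℕ) < 3 ∧ (x : ℕ) < 3 ∧ y ≠ x) ∨ (3 ≤ (y : ℕ) ∧ 3 ≤ (x : ℕ) ∧ y ≠ x) ∨
       ((x : ℕ) = (y : ℕ) + 3))))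
    Iff.rfl

lemma cycleSign_eq {V : Type} {l : ℕ} (o : V → V → Prop) [DecidableRel o] (f : Fin l → V) :
    cycleSign o f =
      (-1) ^ (Finset.univ.filter (fun i : Fin l => o (f i) (f (cyclicSucc i)))).card := by
  unfold cycleSign
  congr!

lemma signedCycleSum_eq {V : Type} [DecidableEq V] [Fintype V] (G : SimpleGraph V)
    [DecidableRel G.Adj] (o : V → V → Prop) [DecidableRel o] (l : ℕ) :
    signedCycleSum G o l =
      (∑ f ∈ Finset.univ.filter (fun f : Fin l → V => IsCycleMap G l f),
        (-1 : ℤ) ^ (Finset.univ.filter (fun i : Fin l => o (f i) (f (cyclicSucc i)))).card) /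
        (2 * (l : ℤ)) := by
  unfold signedCycleSum
  congr! 1
  refine Finset.sum_congr ?_ (fun f _ => cycleSign_eq o f)
  congr!

lemma filter_cycle_image (G : SimpleGraph (Fin 6)) [DecidableRel G.Adj] :
    (Finset.univ.filter (fun f : Fin 6 → Fin 6 => IsCycleMap G 6 f)) =
      (Finset.univ.filter (fun σ : Equiv.Perm (Fin 6) =>
        ∀ i : Fin 6, G.Adj (σ i) (σ (cyclicSucc i)))).image
          (fun σ : Equiv.Perm (Fin 6) => (σ : Fin 6 → Fin 6)) := by
  ext f
  simp only [Finset.mem_image, Finset.mem_filter, Finset.mem_univ, true_and]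
  constructor
  · rintro ⟨hinj, hadj⟩
    exact ⟨Equiv.ofBijective f (Finite.injective_iff_bijective.mp hinj), hadj, rfl⟩
  · rintro ⟨σ, hσ, rfl⟩
    exact ⟨σ.injective, hσ⟩

lemma signedCycleSum_perm (G : SimpleGraph (Fin 6)) [DecidableRel G.Adj]
    (o : Fin 6 → Fin 6 → Prop) [DecidableRel o] (A O : Fin 6 → Fin 6 → Bool)
    (hA : ∀ i j, G.Adj i j ↔ A i j = true) (hO : ∀ i j, o i j ↔ O i j = true) :
    signedCycleSum G o 6 =
      (∑ σ ∈ Finset.univ.filter (fun σ : Equiv.Perm (Fin 6) =>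
          ∀ i : Fin 6, A (σ i) (σ (cyclicSucc i)) = true),
        (-1 : ℤ) ^ (Finset.univ.filter
          (fun i : Fin 6 => O (σ i) (σ (cyclicSucc i)) = true)).card) / 12 := by
  rw [signedCycleSum_eq, filter_cycle_image]
  rw [Finset.sum_image (fun a _ b _ h => Equiv.coe_fn_injective (α := Fin 6) (β := Fin 6) h)]
  have h2 : (2 * ((6 : ℕ) : ℤ)) = 12 := by norm_num
  rw [h2]
  congr 1
  refine Finset.sum_congr ?_ (fun σ _ => ?_)
  · apply Finset.filter_congr
    intro σ _
    simp only [hA]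
  · congr 1
    exact congrArg Finset.card (Finset.filter_congr (fun i _ => by simp only [hO]))

end Decid

def dW0 : ChordDiagram 6 := ⟨![5, 0, 1, 5, 4, 0, 3, 4, 2, 3, 1, 2], by decide⟩
def dW1 : ChordDiagram 6 := ⟨![2, 3, 1, 2, 0, 5, 1, 4, 0, 3, 4, 5], by decide⟩
def dW2 : ChordDiagram 6 := ⟨![3, 2, 4, 3, 0, 5, 4, 1, 0, 2, 5, 1], by decide⟩
def dP0 : ChordDiagram 6 := ⟨![2, 1, 0, 2, 4, 1, 3, 4, 5, 0, 3, 5], by decide⟩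
def dP1 : ChordDiagram 6 := ⟨![2, 0, 1, 2, 3, 5, 0, 4, 3, 1, 4, 5], by decide⟩
def dP3 : ChordDiagram 6 := ⟨![2, 1, 0, 5, 2, 4, 1, 3, 5, 4, 0, 3], by decide⟩

def AdW0 : Fin 6 → Fin 6 → Bool := ![![false, true, false, false, true, true], ![true, false, true, false, false, true], ![false, true, false, true, false, false], ![false, false, true, false, true, false], ![true, false, false, true, false, false], ![true, true, false, false, false, false]]
def OdW0 : Fin 6 → Fin 6 → Bool := ![![false, true, false, false, true, false], ![false, false, true, true, true, false], ![false, false, false, false, false, false], ![false, false, true, false, false, false], ![false, false, false, true, false, false], ![true, true, false, false, false, false]]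
def AdW1 : Fin 6 → Fin 6 → Bool := ![![false, true, false, false, true, true], ![true, false, true, false, false, true], ![false, true, false, true, false, false], ![false, false, true, false, true, true], ![true, false, false, true, false, false], ![true, true, false, true, false, false]]
def OdW1 : Fin 6 → Fin 6 → Bool := ![![false, false, false, false, true, true], ![true, false, false, false, false, true], ![false, true, false, true, false, false], ![true, true, false, false, true, true], ![false, false, false, false, false, false], ![false, false, false, false, true, false]]
def AdW2 : Fin 6 → Fin 6 → Bool := ![![false, true, false, false, true, true], ![true, false, true, false, false, true], ![false, true, false, true, false, true], ![false, false, true, false, true, false], ![true, false, false, true, false, true], ![true, true, true, false, true, false]]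
def OdW2 : Fin 6 → Fin 6 → Bool := ![![false, true, false, false, false, true], ![false, false, false, false, false, false], ![true, true, false, false, true, true], ![false, false, true, false, true, false], ![true, false, false, false, false, true], ![false, true, false, false, false, false]]
def AdP0 : Fin 6 → Fin 6 → Bool := ![![false, true, true, true, false, true], ![true, false, true, false, true, false], ![true, true, false, false, false, false], ![true, false, false, false, true, true], ![false, true, false, true, false, false], ![true, false, false, true, false, false]]
def OdP0 : Fin 6 → Fin 6 → Bool := ![![false, false, false, true, true, true], ![true, false, false, false, true, false], ![true, true, false, false, false, false], ![false, false, false, false, false, true], ![false, false, false, true, false, false], ![false, false, false, false, false, false]]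
def AdP1 : Fin 6 → Fin 6 → Bool := ![![false, true, true, true, false, true], ![true, false, true, false, true, true], ![true, true, false, false, false, false], ![true, false, false, false, true, true], ![false, true, false, true, false, false], ![true, true, false, true, false, false]]
def OdP1 : Fin 6 → Fin 6 → Bool := ![![false, true, false, true, false, true], ![false, false, false, true, true, true], ![true, true, false, false, false, false], ![false, false, false, false, true, true], ![false, false, false, false, false, false], ![false, false, false, false, true, false]]
def AdP3 : Fin 6 → Fin 6 → Bool := ![![false, true, true, true, false, false], ![true, false, true, false, true, true], ![true, true, false, false, false, true], ![true, false, false, false, true, true], ![false, true, false, true, false, true], ![false, true, true, true, true, false]]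
def OdP3 : Fin 6 → Fin 6 → Bool := ![![false, false, false, true, true, true], ![true, false, false, false, true, true], ![true, true, false, false, false, true], ![false, false, false, false, false, false], ![false, false, false, true, false, false], ![false, false, false, true, true, false]]

set_option maxHeartbeats 1000000 in
set_option maxRecDepth 20000 in
lemma rk_dW0 : Rk 3 dW0 = 1 := by
  have h : signedCycleSum dW0.interGraph (dW0.dir dW0.canonical) 6 = 1 := by
    rw [signedCycleSum_perm dW0.interGraph (dW0.dir dW0.canonical) AdW0 OdW0
      (by decide) (by decide)]
    decide
  exact h

set_option maxHeartbeats 1000000 in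
set_option maxRecDepth 20000 in
lemma rk_dW1 : Rk 3 dW1 = -1 := by
  have h : signedCycleSum dW1.interGraph (dW1.dir dW1.canonical) 6 = -1 := by
    rw [signedCycleSum_perm dW1.interGraph (dW1.dir dW1.canonical) AdW1 OdW1
      (by decide) (by decide)]
    decide
  exact h

set_option maxHeartbeats 1000000 in
set_option maxRecDepth 20000 in
lemma rk_dW2 : Rk 3 dW2 = -1 := by
  have h : signedCycleSum dW2.interGraph (dW2.dir dW2.canonical) 6 = -1 := by
    rw [signedCycleSum_perm dW2.interGraph (dW2.dir dW2.canonical) AdW2 OdW2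
      (by decide) (by decide)]
    decide
  exact h

set_option maxHeartbeats 1000000 in
set_option maxRecDepth 20000 in
lemma rk_dP0 : Rk 3 dP0 = 1 := by
  have h : signedCycleSum dP0.interGraph (dP0.dir dP0.canonical) 6 = 1 := by
    rw [signedCycleSum_perm dP0.interGraph (dP0.dir dP0.canonical) AdP0 OdP0
      (by decide) (by decide)]
    decide
  exact h

set_option maxHeartbeats 1000000 in
set_option maxRecDepth 20000 in
lemma rk_dP1 : Rk 3 dP1 = -1 := by
  have h : signedCycleSum dP1.interGraph (dP1.dir dP1.canonical) 6 = -1 := by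
    rw [signedCycleSum_perm dP1.interGraph (dP1.dir dP1.canonical) AdP1 OdP1
      (by decide) (by decide)]
    decide
  exact h

set_option maxHeartbeats 1000000 in
set_option maxRecDepth 20000 in
lemma rk_dP3 : Rk 3 dP3 = -3 := by
  have h : signedCycleSum dP3.interGraph (dP3.dir dP3.canonical) 6 = -3 := by
    rw [signedCycleSum_perm dP3.interGraph (dP3.dir dP3.canonical) AdP3 OdP3
      (by decide) (by decide)]
    decide
  exact h

set_option maxHeartbeats 1000000 in
set_option maxRecDepth 20000 in
lemma eqW1 : toggleEdge dW0.interGraph 5 3 = dW1.interGraph := by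
  ext a b; revert a b; decide

set_option maxHeartbeats 1000000 in
set_option maxRecDepth 20000 in
lemma eqW2 : tildeGraph dW0.interGraph 5 3 = dW2.interGraph := by
  ext a b; revert a b; decide

set_option maxHeartbeats 1000000 in
set_option maxRecDepth 20000 in
lemma eqW3 : toggleEdge dW2.interGraph 5 3 = wheel5 := by
  ext a b; revert a b; decide

set_option maxHeartbeats 1000000 in
set_option maxRecDepth 20000 in
lemma eqP1 : toggleEdge dP0.interGraph 5 1 = dP1.interGraph := by
  ext a b; revert a b; decide

set_option maxHeartbeats 1000000 in
set_option maxRecDepth 20000 in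
lemma eqP2 : tildeGraph dP0.interGraph 5 1 = prism := by
  ext a b; revert a b; decide

set_option maxHeartbeats 1000000 in
set_option maxRecDepth 20000 in
lemma eqP3 : toggleEdge prism 5 1 = dP3.interGraph := by
  ext a b; revert a b; decide

theorem value_on_wheel_and_prism (f : SimpleGraph (Fin 6) → ℤ)
    (hiso : ∀ G H : SimpleGraph (Fin 6), Nonempty (G ≃g H) → f G = f H)
    (h4t : ∀ (G : SimpleGraph (Fin 6)) (A B : Fin 6), A ≠ B →
      f G - f (toggleEdge G A B) =
        f (tildeGraph G A B) - f (toggleEdge (tildeGraph G A B) A B))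
    (hR : ∀ d : ChordDiagram 6, f d.interGraph = Rk 3 d) :
    f wheel5 = -3 ∧ f prism = -1 := by
  have hW := h4t dW0.interGraph 5 3 (by decide)
  rw [eqW1, eqW2, eqW3] at hW
  have hP := h4t dP0.interGraph 5 1 (by decide)
  rw [eqP1, eqP2, eqP3] at hP
  have h0 := hR dW0; have h1 := hR dW1; have h2 := hR dW2
  have h3 := hR dP0; have h4 := hR dP1; have h5 := hR dP3
  rw [rk_dW0] at h0; rw [rk_dW1] at h1; rw [rk_dW2] at h2
  rw [rk_dP0] at h3; rw [rk_dP1] at h4; rw [rk_dP3] at h5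
  constructor <;> linarith
end
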